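/- Let K be a field of prime characteristic p with 2 ≤ p ≤ n-1 for some n ≥ 4, and let R = K[X_1,...,X_n]/(X_1^n+⋯+X_n^n). Then (x_1⋯x_n)^{(n-2)p} ∈ (x_1^{(n-1)p}, ..., x_n^{(n-1)p}) in R; hence (x_1⋯x_n)^{n-2} lies in the Frobenius closure of (x_1^{n-1},...,x_n^{n-1}). -/
import Mathlib


open MvPolynomial

theorem stmt_13 (K : Type*) [Field K] (p n : ℕ) [Fact p.Prime] [CharP K p]
    (hn : 4 ≤ n) (hp : 2 ≤ p) (hpn : p ≤ n - 1)
    (R : Type*) [CommRing R]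
    (f : MvPolynomial (Fin n) K →+* R) (hf : Function.Surjective f)
    (hker : RingHom.ker f = Ideal.span {∑ i : Fin n, X i ^ n})
    (x : Fin n → R) (hx : ∀ i, x i = f (X i)) :
    (∏ i, x i) ^ ((n - 2) * p) ∈
        Ideal.span (Set.range fun i : Fin n => x i ^ ((n - 1) * p)) ∧
      ∃ e : ℕ, ((∏ i, x i) ^ (n - 2)) ^ p ^ e ∈
        Ideal.span (Set.range fun i : Fin n => (x i ^ (n - 1)) ^ p ^ e) := by
  haveI : NeZero n := ⟨by omega⟩
  have hn2 : n ≤ (n - 2) * p := by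
    calc n ≤ (n - 2) * 2 := by omega
    _ ≤ (n - 2) * p := Nat.mul_le_mul_left _ hp
  -- the defining relation holds in R
  have h0 : (∑ j : Fin n, x j ^ n) = 0 := by
    have hmem : (∑ i : Fin n, X i ^ n) ∈ RingHom.ker f := by
      rw [hker]; exact Ideal.subset_span rfl
    have hz : f (∑ i : Fin n, X i ^ n) = 0 := hmem
    simpa [map_sum, map_pow, hx] using hz
  set S := Ideal.span (Set.range fun i : Fin n => x i ^ ((n - 1) * p)) with hS
  set i0 : Fin n := 0 with hi0
  set a : ℕ := (n - 2) * p - n with ha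
  set P : R := ∏ i ∈ Finset.univ.erase i0, x i ^ ((n - 2) * p) with hP
  set h' : R := x i0 ^ a * P with hh'
  have key : (∏ i, x i) ^ ((n - 2) * p) ∈ S := by
    have hz : h' * x i0 ^ n + ∑ j ∈ Finset.univ.erase i0, h' * x j ^ n = 0 := by
      rw [Finset.add_sum_erase Finset.univ (fun j => h' * x j ^ n) (Finset.mem_univ i0),
        ← Finset.mul_sum, h0, mul_zero]
    have e1 : h' * x i0 ^ n = (∏ i, x i) ^ ((n - 2) * p) := by
      rw [← Finset.prod_pow]
      rw [← Finset.mul_prod_erase _ (fun i => x i ^ ((n - 2) * p)) (Finset.mem_univ i0), ← hP]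
      rw [hh']
      have : x i0 ^ a * x i0 ^ n = x i0 ^ ((n - 2) * p) := by
        rw [← pow_add, ha, Nat.sub_add_cancel hn2]
      linear_combination P * this
    have hsum : ∑ j ∈ Finset.univ.erase i0, h' * x j ^ n ∈ S := by
      refine Ideal.sum_mem _ fun j hj => ?_
      have hexp : (n - 2) * p + n = (n - p) + (n - 1) * p := by
        have h1 : (n - 1) * p = (n - 2) * p + p := by
          rw [show n - 1 = n - 2 + 1 from by omega, add_mul, one_mul]
        omega
      have hpow : x j ^ ((n - 2) * p) * x j ^ n = x j ^ (n - p) * x j ^ ((n - 1) * p) := by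
        rw [← pow_add, ← pow_add, hexp]
      have hrw : h' * x j ^ n =
          (x i0 ^ a * (∏ i ∈ (Finset.univ.erase i0).erase j, x i ^ ((n - 2) * p))
            * x j ^ (n - p)) * x j ^ ((n - 1) * p) := by
        rw [hh', hP, ← Finset.mul_prod_erase _ (fun i => x i ^ ((n - 2) * p)) hj]
        linear_combination (x i0 ^ a * ∏ i ∈ (Finset.univ.erase i0).erase j,
          x i ^ ((n - 2) * p)) * hpow
      rw [hrw]
      exact Ideal.mul_mem_left _ _ (Ideal.subset_span ⟨j, rfl⟩)
    have : (∏ i, x i) ^ ((n - 2) * p) =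
        -(∑ j ∈ Finset.univ.erase i0, h' * x j ^ n) := by
      rw [← e1]; linear_combination hz
    rw [this]
    exact neg_mem hsum
  refine ⟨key, 1, ?_⟩
  simpa [pow_one, ← pow_mul] using key
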